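/- For every n ≥ 1, the polynomial identity ∑_{k=0}^{n} binomial(n, k) · (∏_{i=0}^{k} (x + i·t)) · (∏_{j=0}^{n−k−1} (y + j·t)) = x · ∏_{k=1}^{n} (x + y + k·t) holds in the polynomial ring in the variables x, y, t (here ∏_{j=0}^{−1} denotes the empty product, equal to 1). -/

import Mathlib

open MvPolynomial


theorem chu_key {R : Type*} [CommRing R] (a b t : R) (n : ℕ) :
    ∑ k ∈ Finset.range (n+1), (n.choose k : R) *
        (∏ i ∈ Finset.range k, (a + (i:R)*t)) *
        (∏ j ∈ Finset.range (n-k), (b + (j:R)*t)) =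
      ∏ i ∈ Finset.range n, (a + b + (i:R)*t) := by
  induction n with
  | zero => simp
  | succ n ih =>
    have hT1 : ∑ k ∈ Finset.range (n+1), (n.choose k : R) *
        (∏ i ∈ Finset.range k, (a + (i:R)*t)) *
        (∏ j ∈ Finset.range (n-k), (b + (j:R)*t)) * (b + ((n-k : ℕ):R)*t)
        = ∑ k ∈ Finset.range (n+1), (n.choose k : R) *
        (∏ i ∈ Finset.range k, (a + (i:R)*t)) *
        (∏ j ∈ Finset.range (n+1-k), (b + (j:R)*t)) := by
      refine Finset.sum_congr rfl fun k hk => ?_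
      have hk' : k ≤ n := Nat.lt_succ_iff.mp (Finset.mem_range.mp hk)
      have : n + 1 - k = (n - k) + 1 := by omega
      rw [this, Finset.prod_range_succ, mul_assoc]
    have hT2 : ∑ k ∈ Finset.range (n+1), (n.choose k : R) *
        (∏ i ∈ Finset.range k, (a + (i:R)*t)) *
        (∏ j ∈ Finset.range (n-k), (b + (j:R)*t)) * (a + (k:R)*t)
        = ∑ k ∈ Finset.range (n+1), (n.choose k : R) *
        (∏ i ∈ Finset.range (k+1), (a + (i:R)*t)) *
        (∏ j ∈ Finset.range (n-k), (b + (j:R)*t)) := by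
      refine Finset.sum_congr rfl fun k hk => ?_
      rw [Finset.prod_range_succ]
      ring
    have hsplit : ∑ k ∈ Finset.range (n+2), ((n+1).choose k : R) *
        (∏ i ∈ Finset.range k, (a + (i:R)*t)) *
        (∏ j ∈ Finset.range (n+1-k), (b + (j:R)*t))
        = (∑ k ∈ Finset.range (n+1), (n.choose k : R) *
            (∏ i ∈ Finset.range k, (a + (i:R)*t)) *
            (∏ j ∈ Finset.range (n+1-k), (b + (j:R)*t)))
          + (∑ k ∈ Finset.range (n+1), (n.choose k : R) *
            (∏ i ∈ Finset.range (k+1), (a + (i:R)*t)) *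
            (∏ j ∈ Finset.range (n-k), (b + (j:R)*t))) := by
      rw [Finset.sum_range_succ' _ (n+1)]
      have hf : ∀ k, ((n+1).choose (k+1) : R) *
          (∏ i ∈ Finset.range (k+1), (a + (i:R)*t)) *
          (∏ j ∈ Finset.range (n+1-(k+1)), (b + (j:R)*t))
          = (n.choose k : R) *
            (∏ i ∈ Finset.range (k+1), (a + (i:R)*t)) *
            (∏ j ∈ Finset.range (n-k), (b + (j:R)*t))
          + (n.choose (k+1) : R) *
            (∏ i ∈ Finset.range (k+1), (a + (i:R)*t)) *
            (∏ j ∈ Finset.range (n-k), (b + (j:R)*t)) := by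
        intro k
        have h1 : n + 1 - (k+1) = n - k := by omega
        rw [h1, Nat.choose_succ_succ, Nat.cast_add, add_mul, add_mul]
      simp only [hf, Finset.sum_add_distrib]
      have h2 : (∑ x ∈ Finset.range (n+1), (n.choose (x+1) : R) *
            (∏ i ∈ Finset.range (x+1), (a + (i:R)*t)) *
            (∏ j ∈ Finset.range (n-x), (b + (j:R)*t)))
          + (((n+1).choose 0 : R) * (∏ i ∈ Finset.range 0, (a + (i:R)*t)) *
            (∏ j ∈ Finset.range (n+1-0), (b + (j:R)*t)))
          = ∑ k ∈ Finset.range (n+1), (n.choose k : R) *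
            (∏ i ∈ Finset.range k, (a + (i:R)*t)) *
            (∏ j ∈ Finset.range (n+1-k), (b + (j:R)*t)) := by
        rw [Finset.sum_range_succ' (fun k => (n.choose k : R) *
            (∏ i ∈ Finset.range k, (a + (i:R)*t)) *
            (∏ j ∈ Finset.range (n+1-k), (b + (j:R)*t))) n,
          Finset.sum_range_succ (fun k => (n.choose (k+1) : R) *
            (∏ i ∈ Finset.range (k+1), (a + (i:R)*t)) *
            (∏ j ∈ Finset.range (n-k), (b + (j:R)*t))) n]
        simp only [Nat.choose_succ_self, Nat.cast_zero, zero_mul, add_zero,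
          Nat.choose_zero_right, Nat.cast_one, one_mul, Finset.prod_range_zero,
          Nat.sub_zero, Nat.succ_sub_succ]
      linear_combination h2
    calc ∑ k ∈ Finset.range (n+2), ((n+1).choose k : R) *
        (∏ i ∈ Finset.range k, (a + (i:R)*t)) *
        (∏ j ∈ Finset.range (n+1-k), (b + (j:R)*t))
        = ∑ k ∈ Finset.range (n+1), (n.choose k : R) *
            (∏ i ∈ Finset.range k, (a + (i:R)*t)) *
            (∏ j ∈ Finset.range (n-k), (b + (j:R)*t)) * ((b + ((n-k:ℕ):R)*t) + (a + (k:R)*t)) := by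
          rw [hsplit, ← hT1, ← hT2, ← Finset.sum_add_distrib]
          exact Finset.sum_congr rfl fun k hk => by ring
      _ = (∑ k ∈ Finset.range (n+1), (n.choose k : R) *
            (∏ i ∈ Finset.range k, (a + (i:R)*t)) *
            (∏ j ∈ Finset.range (n-k), (b + (j:R)*t))) * (a + b + (n:R)*t) := by
          rw [Finset.sum_mul]
          refine Finset.sum_congr rfl fun k hk => ?_
          have hk' : k ≤ n := Nat.lt_succ_iff.mp (Finset.mem_range.mp hk)
          have : ((n-k : ℕ):R) = (n:R) - (k:R) := by
            rw [Nat.cast_sub hk']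
          rw [this]; ring
      _ = ∏ i ∈ Finset.range (n+1), (a + b + (i:R)*t) := by
          rw [ih, Finset.prod_range_succ]


theorem chu_shift {R : Type*} [CommRing R] (x t : R) (k : ℕ) :
    ∏ i ∈ Finset.range (k+1), (x + (i:R)*t)
      = x * ∏ i ∈ Finset.range k, ((x + t) + (i:R)*t) := by
  rw [Finset.prod_range_succ']
  simp only [Nat.cast_zero, zero_mul, add_zero]
  rw [mul_comm]
  congr 1
  refine Finset.prod_congr rfl fun i _ => by push_cast; ring

/-- A variant of the Chu–Vandermonde formula:
`∑_{k=0}^{n} C(n,k) ∏_{i=0}^{k}(x+it) ∏_{j=0}^{n-k-1}(y+jt) = x ∏_{k=1}^{n}(x+y+kt)`,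
as polynomials in `x = X 0`, `y = X 1`, `t = X 2` over `ℤ`. -/
theorem chu_vandermonde_variant (n : ℕ) (hn : 1 ≤ n) :
    ∑ k ∈ Finset.range (n + 1),
        (n.choose k : MvPolynomial (Fin 3) ℤ) *
          (∏ i ∈ Finset.range (k + 1), (X 0 + (i : MvPolynomial (Fin 3) ℤ) * X 2)) *
          (∏ j ∈ Finset.range (n - k), (X 1 + (j : MvPolynomial (Fin 3) ℤ) * X 2)) =
      X 0 * ∏ k ∈ Finset.Icc 1 n, (X 0 + X 1 + (k : MvPolynomial (Fin 3) ℤ) * X 2) := by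
  have h1 : ∑ k ∈ Finset.range (n + 1),
        (n.choose k : MvPolynomial (Fin 3) ℤ) *
          (∏ i ∈ Finset.range (k + 1), (X 0 + (i : MvPolynomial (Fin 3) ℤ) * X 2)) *
          (∏ j ∈ Finset.range (n - k), (X 1 + (j : MvPolynomial (Fin 3) ℤ) * X 2))
      = X 0 * ∑ k ∈ Finset.range (n + 1),
        (n.choose k : MvPolynomial (Fin 3) ℤ) *
          (∏ i ∈ Finset.range k, ((X 0 + X 2) + (i : MvPolynomial (Fin 3) ℤ) * X 2)) *
          (∏ j ∈ Finset.range (n - k), (X 1 + (j : MvPolynomial (Fin 3) ℤ) * X 2)) := by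
    rw [Finset.mul_sum]
    refine Finset.sum_congr rfl fun k _ => ?_
    rw [chu_shift]
    ring
  rw [h1, chu_key]
  congr 1
  rw [← Finset.Ico_add_one_right_eq_Icc, Finset.prod_Ico_eq_prod_range]
  refine Finset.prod_congr rfl fun i _ => by push_cast; ring
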